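/- Let k be a positive integer and define φ_k(n) to be the number of k-tuples (a₁,…,a_k) with 1 ≤ aᵢ ≤ n such that gcd(a₁⋯a_k, n) = 1 and gcd(a₁+⋯+a_k, n) = 1. Then φ_k is a multiplicative arithmetic function. -/

import Mathlib

/-- The `k`-dimensional generalized Euler function `φ_k(n)`: the number of
`k`-tuples `(a₁,…,a_k)` with `1 ≤ aᵢ ≤ n`, `gcd(a₁⋯a_k, n) = 1` and
`gcd(a₁+⋯+a_k, n) = 1`. -/
def tothPhi (k n : ℕ) : ℕ :=
  ((Fintype.piFinset fun _ : Fin k => Finset.Icc 1 n).filter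
    (fun a => Nat.gcd (∏ i, a i) n = 1 ∧ Nat.gcd (∑ i, a i) n = 1)).card

open scoped Classical

lemma toth_back (n : ℕ) [NeZero n] (a : ℕ) (h1 : 1 ≤ a) (h2 : a ≤ n) :
    (if ((a : ZMod n) = 0) then n else (a : ZMod n).val) = a := by
  rcases eq_or_lt_of_le h2 with rfl | h
  · simp
  · rw [if_neg, ZMod.val_natCast_of_lt h]
    rw [ZMod.natCast_eq_zero_iff]
    intro h0
    exact absurd (Nat.le_of_dvd h1 h0) (not_le.mpr h)

lemma toth_card (k n : ℕ) [NeZero n] :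
    tothPhi k n =
      Fintype.card {f : Fin k → ZMod n // IsUnit (∏ i, f i) ∧ IsUnit (∑ i, f i)} := by
  have hn : 0 < n := Nat.pos_of_ne_zero (NeZero.ne n)
  rw [Fintype.card_subtype, tothPhi]
  refine Finset.card_bij' (fun a _ => fun j => ((a j : ℕ) : ZMod n))
    (fun f _ => fun j => if f j = 0 then n else (f j).val) ?_ ?_ ?_ ?_
  · intro a ha
    simp only [Finset.mem_filter, Fintype.mem_piFinset, Finset.mem_Icc] at ha
    simp only [Finset.mem_filter, Finset.mem_univ, true_and]
    constructor
    · rw [← Nat.cast_prod, ZMod.isUnit_iff_coprime]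
      exact ha.2.1
    · rw [← Nat.cast_sum, ZMod.isUnit_iff_coprime]
      exact ha.2.2
  · intro f hf
    simp only [Finset.mem_filter, Finset.mem_univ, true_and] at hf
    have key : ∀ j, (((if f j = 0 then n else (f j).val : ℕ)) : ZMod n) = f j := by
      intro j
      split_ifs with h
      · simp [h]
      · simp [ZMod.natCast_val, ZMod.cast_id]
    have mem : ∀ j, (if f j = 0 then n else (f j).val) ∈ Finset.Icc 1 n := by
      intro j
      split_ifs with h
      · exact Finset.mem_Icc.mpr ⟨hn, le_rfl⟩
      · simp only [Finset.mem_Icc]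
        exact ⟨Nat.one_le_iff_ne_zero.mpr (by simpa [ZMod.val_eq_zero] using h),
          le_of_lt (ZMod.val_lt _)⟩
    simp only [Finset.mem_filter, Fintype.mem_piFinset]
    refine ⟨mem, ?_, ?_⟩
    · refine (ZMod.isUnit_iff_coprime _ n).mp ?_
      rw [Nat.cast_prod]
      simp only [key]
      exact hf.1
    · refine (ZMod.isUnit_iff_coprime _ n).mp ?_
      rw [Nat.cast_sum]
      simp only [key]
      exact hf.2
  · intro a ha
    simp only [Finset.mem_filter, Fintype.mem_piFinset, Finset.mem_Icc] at ha
    funext j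
    exact toth_back n (a j) (ha.1 j).1 (ha.1 j).2
  · intro f hf
    funext j
    show (((if f j = 0 then n else (f j).val) : ℕ) : ZMod n) = f j
    split_ifs with h
    · simp [h]
    · simp [ZMod.natCast_val, ZMod.cast_id]

lemma toth_one (k : ℕ) : tothPhi k 1 = 1 := by
  haveI : NeZero 1 := ⟨one_ne_zero⟩
  rw [toth_card k 1]
  rw [Fintype.card_eq_one_iff]
  refine ⟨⟨fun _ => 0, ?_, ?_⟩, ?_⟩
  · exact isUnit_of_subsingleton _
  · exact isUnit_of_subsingleton _
  · intro y
    ext j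
    exact Subsingleton.elim _ _

lemma prod_isUnit_iff {M N : Type*} [Monoid M] [Monoid N] (p : M × N) :
    IsUnit p ↔ IsUnit p.1 ∧ IsUnit p.2 := by
  rw [← associated_one_iff_isUnit, ← associated_one_iff_isUnit,
    ← associated_one_iff_isUnit, Prod.associated_iff]
  rfl

lemma toth_mul (k m n : ℕ) (hm : 0 < m) (hn : 0 < n) (h : Nat.Coprime m n) :
    tothPhi k (m * n) = tothPhi k m * tothPhi k n := by
  haveI : NeZero m := ⟨hm.ne'⟩
  haveI : NeZero n := ⟨hn.ne'⟩
  haveI : NeZero (m * n) := ⟨(Nat.mul_pos hm hn).ne'⟩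
  rw [toth_card k m, toth_card k n, toth_card k (m * n), ← Fintype.card_prod]
  apply Fintype.card_congr
  set e := ZMod.chineseRemainder h with he
  have eunit : ∀ x : ZMod (m * n), IsUnit x ↔ IsUnit (e x).1 ∧ IsUnit (e x).2 := by
    intro x
    rw [← prod_isUnit_iff]
    constructor
    · intro hx; exact hx.map e
    · intro hx
      have := hx.map e.symm.toRingHom
      simpa using this
  have hprod : ∀ f : Fin k → ZMod (m * n),
      IsUnit (∏ i, f i) ↔ IsUnit (∏ i, (e (f i)).1) ∧ IsUnit (∏ i, (e (f i)).2) := by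
    intro f
    rw [eunit, map_prod, Prod.fst_prod, Prod.snd_prod]
  have hsum : ∀ f : Fin k → ZMod (m * n),
      IsUnit (∑ i, f i) ↔ IsUnit (∑ i, (e (f i)).1) ∧ IsUnit (∑ i, (e (f i)).2) := by
    intro f
    rw [eunit, map_sum, Prod.fst_sum, Prod.snd_sum]
  refine
    { toFun := fun f =>
        (⟨fun j => (e (f.1 j)).1, ((hprod f.1).mp f.2.1).1, ((hsum f.1).mp f.2.2).1⟩,
         ⟨fun j => (e (f.1 j)).2, ((hprod f.1).mp f.2.1).2, ((hsum f.1).mp f.2.2).2⟩),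
      invFun := fun p => ⟨fun j => e.symm (p.1.1 j, p.2.1 j), ?_, ?_⟩,
      left_inv := ?_, right_inv := ?_ }
  · rw [hprod]
    constructor
    · simpa using p.1.2.1
    · simpa using p.2.2.1
  · rw [hsum]
    constructor
    · simpa using p.1.2.2
    · simpa using p.2.2.2
  · intro f
    ext j
    simp
  · intro p
    ext j <;> simp

/-- For every positive integer `k`, the function `φ_k` is multiplicative:
`φ_k(1) = 1` and `φ_k(mn) = φ_k(m)·φ_k(n)` whenever `gcd(m,n) = 1`. -/
theorem tothPhi_multiplicative (k : ℕ) (hk : 0 < k) :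
    tothPhi k 1 = 1 ∧
      ∀ m n : ℕ, Nat.Coprime m n → tothPhi k (m * n) = tothPhi k m * tothPhi k n := by
  refine ⟨toth_one k, fun m n h => ?_⟩
  rcases Nat.eq_zero_or_pos m with rfl | hm
  · have : n = 1 := (Nat.coprime_zero_left n).mp h
    subst this; simp [toth_one]
  rcases Nat.eq_zero_or_pos n with rfl | hn
  · have : m = 1 := (Nat.coprime_zero_right m).mp h
    subst this; simp [toth_one]
  exact toth_mul k m n hm hn h
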